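/- arXiv:1204.2935 — 5 statements merged into one kernel-verified Lean document; each statement's English description precedes it below -/
import Mathlib

section
/- Every Rest Bounded Variation Sequence is a Mean Rest Bounded Variation Sequence: if a sequence (c_k) of nonnegative reals tending to zero satisfies ∑_{k=m}^∞ |c_k - c_{k+1}| ≤ K·c_m for all positive integers m (for some constant K), then there exists a constant K' such that ∑_{k=m}^∞ |c_k - c_{k+1}| ≤ K'/(m+1) · ∑_{k=⌈m/2⌉}^{m} c_k for all positive integers m. -/
open Finset Filter

/-- Every Rest Bounded Variation Sequence is a Mean Rest Bounded Variation Sequence. -/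
theorem rbvs_subset_mrbvs (c : ℕ → ℝ) (hpos : ∀ k, 0 ≤ c k)
    (hlim : Tendsto c atTop (nhds 0)) (K : ℝ)
    (hRBV : ∀ m : ℕ, 1 ≤ m → ∑' k : ℕ, |c (m + k) - c (m + k + 1)| ≤ K * c m) :
    ∃ K' : ℝ, ∀ m : ℕ, 1 ≤ m →
      ∑' k : ℕ, |c (m + k) - c (m + k + 1)| ≤
        K' / (m + 1) * ∑ k ∈ Finset.Icc ((m + 1) / 2) m, c k := by
  set K0 := max K 0 with hK0def
  have hK0nn : 0 ≤ K0 := le_max_right _ _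
  have hRBV' : ∀ m : ℕ, 1 ≤ m → ∑' k : ℕ, |c (m + k) - c (m + k + 1)| ≤ K0 * c m := by
    intro m hm
    exact (hRBV m hm).trans (mul_le_mul_of_nonneg_right (le_max_left _ _) (hpos m))
  refine ⟨2 * K0 * (1 + K0), ?_⟩
  intro m hm
  have hsumnn : (0:ℝ) ≤ ∑ k ∈ Finset.Icc ((m + 1) / 2) m, c k :=
    Finset.sum_nonneg fun k _ => hpos k
  by_cases hs : Summable (fun j : ℕ => |c (m + j) - c (m + j + 1)|)
  · -- full series summable
    have hg : Summable (fun j : ℕ => |c j - c (j + 1)|) := by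
      have h2 : Summable (fun j : ℕ => |c (j + m) - c (j + m + 1)|) := by
        simpa [add_comm m] using hs
      exact (summable_nat_add_iff m).mp h2
    have key : ∀ k, 1 ≤ k → k ≤ m → c m ≤ (1 + K0) * c k := by
      intro k hk1 hkm
      have hsk : Summable (fun j : ℕ => |c (k + j) - c (k + j + 1)|) := by
        simpa [add_comm k] using (summable_nat_add_iff k).mpr hg
      have htel : c m - c k = ∑ i ∈ Finset.range (m - k), (c (k + (i + 1)) - c (k + i)) := by
        have := Finset.sum_range_sub (fun i => c (k + i)) (m - k)
        rw [this]
        congr 2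
        omega
      have h1 : c m - c k ≤ ∑ i ∈ Finset.range (m - k), |c (k + i) - c (k + i + 1)| := by
        rw [htel]
        apply Finset.sum_le_sum
        intro i _
        have : c (k + (i + 1)) - c (k + i) = -(c (k + i) - c (k + i + 1)) := by ring_nf
        rw [this]
        exact neg_le_abs _
      have h2 : ∑ i ∈ Finset.range (m - k), |c (k + i) - c (k + i + 1)| ≤
          ∑' j : ℕ, |c (k + j) - c (k + j + 1)| :=
        Summable.sum_le_tsum _ (fun i _ => abs_nonneg _) hsk
      have h3 := hRBV' k hk1
      linarith
    set N := (Finset.Icc ((m + 1) / 2) m).card with hN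
    have hNval : N = m + 1 - (m + 1) / 2 := by rw [hN, Nat.card_Icc]
    have hNge : (m + 1 : ℝ) ≤ 2 * N := by
      have : m + 1 ≤ 2 * N := by omega
      exact_mod_cast this
    have hsum : (N : ℝ) * c m ≤ (1 + K0) * ∑ k ∈ Finset.Icc ((m + 1) / 2) m, c k := by
      rw [Finset.mul_sum]
      calc (N : ℝ) * c m = ∑ _k ∈ Finset.Icc ((m + 1) / 2) m, c m := by
            rw [Finset.sum_const, nsmul_eq_mul]
        _ ≤ _ := by
            apply Finset.sum_le_sum
            intro k hk
            rw [Finset.mem_Icc] at hk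
            exact key k (by omega) hk.2
    have hLHS : ∑' k : ℕ, |c (m + k) - c (m + k + 1)| ≤ K0 * c m := hRBV' m hm
    have hfin : K0 * c m ≤ 2 * K0 * (1 + K0) / (m + 1) *
        ∑ k ∈ Finset.Icc ((m + 1) / 2) m, c k := by
      rw [div_mul_eq_mul_div, le_div_iff₀ (by positivity)]
      have hcm := hpos m
      nlinarith [mul_le_mul_of_nonneg_left hsum (by linarith : (0:ℝ) ≤ 2 * K0),
        mul_le_mul_of_nonneg_left hNge (mul_nonneg hK0nn hcm)]
    linarith
  · rw [tsum_eq_zero_of_not_summable hs]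
    have : (0:ℝ) ≤ 2 * K0 * (1 + K0) / (m + 1) := by positivity
    exact mul_nonneg this hsumnn
end

section
/- Every Head Bounded Variation Sequence is a Mean Head Bounded Variation Sequence: if a finite sequence (c_k)_{k=0}^n of nonnegative reals satisfies ∑_{k=0}^{m-1} |c_k - c_{k+1}| ≤ K·c_m for all 1 ≤ m ≤ n, then there is a constant K' with ∑_{k=0}^{n-m-1} |c_k - c_{k+1}| ≤ K'/(m+1) · ∑_{k=n-m}^n c_k for all positive integers m < n. -/
open Finset

/-- Every Head Bounded Variation Sequence is a Mean Head Bounded Variation Sequence. -/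
theorem hbvs_subset_mhbvs (n : ℕ) (c : ℕ → ℝ) (hpos : ∀ k ≤ n, 0 ≤ c k) (K : ℝ)
    (hHBV : ∀ m : ℕ, 1 ≤ m → m ≤ n →
      ∑ k ∈ Finset.range m, |c k - c (k + 1)| ≤ K * c m) :
    ∃ K' : ℝ, ∀ m : ℕ, 0 < m → m < n →
      ∑ k ∈ Finset.range (n - m), |c k - c (k + 1)| ≤
        K' / (m + 1) * ∑ k ∈ Finset.Icc (n - m) n, c k := by
  refine ⟨K, fun m hm hmn => ?_⟩
  set L := ∑ k ∈ Finset.range (n - m), |c k - c (k + 1)| with hL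
  have h1 : ∀ j ∈ Finset.Icc (n - m) n, L ≤ K * c j := by
    intro j hj
    simp only [Finset.mem_Icc] at hj
    have hj1 : 1 ≤ j := le_trans (by omega) hj.1
    calc L ≤ ∑ k ∈ Finset.range j, |c k - c (k + 1)| :=
          Finset.sum_le_sum_of_subset_of_nonneg (Finset.range_subset_range.2 (by omega))
            (fun i _ _ => abs_nonneg _)
      _ ≤ K * c j := hHBV j hj1 hj.2
  have h2 : (Finset.Icc (n - m) n).card = m + 1 := by
    rw [Nat.card_Icc]; omega
  have h3 : (m + 1 : ℝ) * L ≤ K * ∑ k ∈ Finset.Icc (n - m) n, c k := by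
    have := Finset.sum_le_sum h1
    rw [Finset.sum_const, h2, nsmul_eq_mul, ← Finset.mul_sum] at this
    push_cast at this
    exact this
  have hm1 : (0:ℝ) < m + 1 := by positivity
  rw [div_mul_eq_mul_div, le_div_iff₀ hm1]
  linarith [h3]
end

section
/- For nonnegative reals a_0, ..., a_n, any real t, and any 0 ≤ τ ≤ n, the following partial summation estimate holds: |∑_{k=0}^n a_k sin((2k+1)t/2) sin(t/2)| ≤ |t| ∑_{k=0}^τ a_k + ∑_{k=τ}^{n-1} |a_k - a_{k+1}| + a_n, provided τ ≥ 1. -/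
open Finset Real

lemma my_abel_identity (a c : ℕ → ℝ) (m : ℕ) : ∀ n, m ≤ n →
    ∑ k ∈ Finset.Ico m (n + 1), a k * (c k - c (k + 1))
      = a m * c m - a n * c (n + 1) + ∑ k ∈ Finset.Ico m n, (a (k + 1) - a k) * c (k + 1) := by
  intro n hn
  induction n, hn using Nat.le_induction with
  | base =>
    rw [Finset.sum_Ico_succ_top le_rfl, Finset.Ico_self]
    simp only [Finset.sum_empty]
    ring
  | succ n hn ih =>
    rw [Finset.sum_Ico_succ_top (by omega : m ≤ n + 1), ih, Finset.sum_Ico_succ_top hn]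
    ring

lemma my_telescope (a : ℕ → ℝ) (m : ℕ) : ∀ n, m ≤ n →
    ∑ k ∈ Finset.Ico m n, (a k - a (k + 1)) = a m - a n := by
  intro n hn
  induction n, hn using Nat.le_induction with
  | base => simp
  | succ n hn ih =>
    rw [Finset.sum_Ico_succ_top hn, ih]
    ring

/-- Partial summation estimate:
`|∑_{k=0}^n a_k sin((2k+1)t/2) sin(t/2)| ≤ |t| ∑_{k=0}^τ a_k + ∑_{k=τ}^{n-1} |a_k - a_{k+1}| + a_n`. -/
theorem abel_summation_sin_estimate (n τ : ℕ) (a : ℕ → ℝ) (hpos : ∀ k ≤ n, 0 ≤ a k)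
    (t : ℝ) (hτ1 : 1 ≤ τ) (hτn : τ ≤ n) :
    |∑ k ∈ Finset.range (n + 1), a k * Real.sin ((2 * k + 1) * t / 2) * Real.sin (t / 2)| ≤
      |t| * ∑ k ∈ Finset.range (τ + 1), a k +
        ∑ k ∈ Finset.Ico τ n, |a k - a (k + 1)| + a n := by
  set c : ℕ → ℝ := fun k => Real.cos (k * t) with hc
  have trig : ∀ k : ℕ, Real.sin ((2 * k + 1) * t / 2) * Real.sin (t / 2)
      = (c k - c (k + 1)) / 2 := by
    intro k
    have h := Real.cos_sub_cos ((k : ℝ) * t) (((k : ℝ) + 1) * t)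
    have h1 : ((k : ℝ) * t + ((k : ℝ) + 1) * t) / 2 = (2 * k + 1) * t / 2 := by ring
    have h2 : ((k : ℝ) * t - ((k : ℝ) + 1) * t) / 2 = -(t / 2) := by ring
    rw [h1, h2, Real.sin_neg] at h
    simp only [hc]
    push_cast
    linarith [h]
  -- split the sum
  have hsum : ∑ k ∈ Finset.range (n + 1), a k * Real.sin ((2 * k + 1) * t / 2) * Real.sin (t / 2)
      = ∑ k ∈ Finset.range (τ + 1), a k * Real.sin ((2 * k + 1) * t / 2) * Real.sin (t / 2)
        + ∑ k ∈ Finset.Ico (τ + 1) (n + 1),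
            a k * Real.sin ((2 * k + 1) * t / 2) * Real.sin (t / 2) := by
    rw [Finset.range_eq_Ico, Finset.range_eq_Ico]
    exact (Finset.sum_Ico_consecutive (fun k : ℕ => a k * Real.sin ((2 * k + 1) * t / 2) * Real.sin (t / 2)) (by omega : 0 ≤ τ + 1) (by omega : τ + 1 ≤ n + 1)).symm
  -- bound on the first part
  have hb1 : |∑ k ∈ Finset.range (τ + 1), a k * Real.sin ((2 * k + 1) * t / 2) * Real.sin (t / 2)|
      ≤ |t| * ∑ k ∈ Finset.range (τ + 1), a k := by
    calc |∑ k ∈ Finset.range (τ + 1), a k * Real.sin ((2 * k + 1) * t / 2) * Real.sin (t / 2)|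
        ≤ ∑ k ∈ Finset.range (τ + 1),
            |a k * Real.sin ((2 * k + 1) * t / 2) * Real.sin (t / 2)| :=
          Finset.abs_sum_le_sum_abs _ _
      _ ≤ ∑ k ∈ Finset.range (τ + 1), |t| * a k := by
          refine Finset.sum_le_sum fun k hk => ?_
          have hk' : k ≤ n := by
            have := Finset.mem_range.mp hk; omega
          have ha := hpos k hk'
          rw [abs_mul, abs_mul, abs_of_nonneg ha]
          have h1 : |Real.sin ((2 * k + 1) * t / 2)| ≤ 1 := Real.abs_sin_le_one _
          have h2 : |Real.sin (t / 2)| ≤ |t| := by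
            calc |Real.sin (t / 2)| ≤ |t / 2| := Real.abs_sin_le_abs
              _ ≤ |t| := by rw [abs_div, abs_two]; linarith [abs_nonneg t]
          calc a k * |Real.sin ((2 * k + 1) * t / 2)| * |Real.sin (t / 2)|
              ≤ a k * (1 * |t|) := by
                rw [mul_assoc]
                exact mul_le_mul_of_nonneg_left
                  (mul_le_mul h1 h2 (abs_nonneg _) zero_le_one) ha
            _ = |t| * a k := by ring
      _ = |t| * ∑ k ∈ Finset.range (τ + 1), a k := by rw [Finset.mul_sum]
  -- bound on the second part
  have hb2 : |∑ k ∈ Finset.Ico (τ + 1) (n + 1),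
        a k * Real.sin ((2 * k + 1) * t / 2) * Real.sin (t / 2)|
      ≤ ∑ k ∈ Finset.Ico τ n, |a k - a (k + 1)| + a n := by
    have hco : ∀ k, |c k| ≤ 1 := fun k => Real.abs_cos_le_one _
    have hΔnn : (0:ℝ) ≤ ∑ k ∈ Finset.Ico τ n, |a k - a (k + 1)| :=
      Finset.sum_nonneg fun k _ => abs_nonneg _
    rcases eq_or_lt_of_le hτn with heq | hlt
    · subst heq
      rw [Finset.Ico_self, Finset.sum_empty, abs_zero]
      have := hpos τ le_rfl
      linarith
    · have hm : τ + 1 ≤ n := hlt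
      have hrw : ∑ k ∈ Finset.Ico (τ + 1) (n + 1),
            a k * Real.sin ((2 * k + 1) * t / 2) * Real.sin (t / 2)
          = (∑ k ∈ Finset.Ico (τ + 1) (n + 1), a k * (c k - c (k + 1))) / 2 := by
        rw [Finset.sum_div]
        refine Finset.sum_congr rfl fun k _ => ?_
        rw [mul_assoc, trig k]
        ring
      rw [hrw, my_abel_identity a c (τ + 1) n hm]
      -- bound pieces
      have habel : |a (τ + 1) * c (τ + 1) - a n * c (n + 1)
            + ∑ k ∈ Finset.Ico (τ + 1) n, (a (k + 1) - a k) * c (k + 1)|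
          ≤ a (τ + 1) + a n + ∑ k ∈ Finset.Ico (τ + 1) n, |a k - a (k + 1)| := by
        have h1 : |a (τ + 1) * c (τ + 1)| ≤ a (τ + 1) := by
          rw [abs_mul, abs_of_nonneg (hpos _ (by omega))]
          have := hco (τ + 1)
          nlinarith [hpos (τ + 1) (by omega : τ + 1 ≤ n)]
        have h2 : |a n * c (n + 1)| ≤ a n := by
          rw [abs_mul, abs_of_nonneg (hpos n le_rfl)]
          have := hco (n + 1)
          nlinarith [hpos n le_rfl]
        have h3 : |∑ k ∈ Finset.Ico (τ + 1) n, (a (k + 1) - a k) * c (k + 1)|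
            ≤ ∑ k ∈ Finset.Ico (τ + 1) n, |a k - a (k + 1)| := by
          calc |∑ k ∈ Finset.Ico (τ + 1) n, (a (k + 1) - a k) * c (k + 1)|
              ≤ ∑ k ∈ Finset.Ico (τ + 1) n, |(a (k + 1) - a k) * c (k + 1)| :=
                Finset.abs_sum_le_sum_abs _ _
            _ ≤ ∑ k ∈ Finset.Ico (τ + 1) n, |a k - a (k + 1)| := by
                refine Finset.sum_le_sum fun k _ => ?_
                rw [abs_mul, abs_sub_comm]
                have := hco (k + 1)
                nlinarith [abs_nonneg (a k - a (k + 1))]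
        calc |a (τ + 1) * c (τ + 1) - a n * c (n + 1)
              + ∑ k ∈ Finset.Ico (τ + 1) n, (a (k + 1) - a k) * c (k + 1)|
            ≤ |a (τ + 1) * c (τ + 1)| + |a n * c (n + 1)|
              + |∑ k ∈ Finset.Ico (τ + 1) n, (a (k + 1) - a k) * c (k + 1)| := by
              have ha1 := abs_add_le (a (τ + 1) * c (τ + 1) - a n * c (n + 1))
                (∑ k ∈ Finset.Ico (τ + 1) n, (a (k + 1) - a k) * c (k + 1))
              have ha2 := abs_sub (a (τ + 1) * c (τ + 1)) (a n * c (n + 1))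
              linarith
          _ ≤ a (τ + 1) + a n + ∑ k ∈ Finset.Ico (τ + 1) n, |a k - a (k + 1)| := by
              linarith
      -- a (τ+1) ≤ ∑ |Δ| + a n
      have hmono : a (τ + 1) ≤ ∑ k ∈ Finset.Ico (τ + 1) n, |a k - a (k + 1)| + a n := by
        have htel := my_telescope a (τ + 1) n hm
        have : a (τ + 1) - a n ≤ ∑ k ∈ Finset.Ico (τ + 1) n, |a k - a (k + 1)| := by
          rw [← htel]
          exact Finset.sum_le_sum fun k _ => le_abs_self _
        linarith
      have hsub : ∑ k ∈ Finset.Ico (τ + 1) n, |a k - a (k + 1)|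
          ≤ ∑ k ∈ Finset.Ico τ n, |a k - a (k + 1)| := by
        refine Finset.sum_le_sum_of_subset_of_nonneg ?_ fun k _ _ => abs_nonneg _
        exact Finset.Ico_subset_Ico (by omega) le_rfl
      rw [abs_div, abs_two]
      linarith
  calc |∑ k ∈ Finset.range (n + 1), a k * Real.sin ((2 * k + 1) * t / 2) * Real.sin (t / 2)|
      ≤ |∑ k ∈ Finset.range (τ + 1), a k * Real.sin ((2 * k + 1) * t / 2) * Real.sin (t / 2)|
        + |∑ k ∈ Finset.Ico (τ + 1) (n + 1),
            a k * Real.sin ((2 * k + 1) * t / 2) * Real.sin (t / 2)| := by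
        rw [hsum]; exact abs_add_le _ _
    _ ≤ |t| * ∑ k ∈ Finset.range (τ + 1), a k
        + (∑ k ∈ Finset.Ico τ n, |a k - a (k + 1)| + a n) := add_le_add hb1 hb2
    _ = _ := by ring
end

section
/- Let 2 ≤ n, let 2π/n ≤ t ≤ π, set τ = ⌊π/t⌋, and let (a_{n,k})_{k=0}^n be a nonnegative sequence belonging to MRBVS with uniform constant K, i.e. ∑_{k=m}^{n-1} |a_{n,k} - a_{n,k+1}| ≤ K/(m+1) ∑_{m/2 ≤ k ≤ m} a_{n,k} for all 0 ≤ m < n. Then there exists a constant C (depending only on K) such that |∑_{k=0}^n a_{n,k} D_k(t)| ≤ C · t^{-1} · ∑_{k=0}^τ a_{n,k}. -/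
open Finset Real

lemma dir_closed (t : ℝ) (k : ℕ) :
    2 * Real.sin (t/2) * (1/2 + ∑ ν ∈ Finset.Icc 1 k, Real.cos (ν * t)) =
      Real.sin ((2*(k:ℝ)+1) * (t/2)) := by
  induction k with
  | zero => simp; ring_nf
  | succ k ih =>
    rw [Finset.sum_Icc_succ_top (Nat.one_le_iff_ne_zero.mpr (Nat.succ_ne_zero k))]
    push_cast
    have e1 : (2*((k:ℝ)+1)+1) * (t/2) = ((k:ℝ)+1)*t + t/2 := by ring
    have e2 : (2*(k:ℝ)+1) * (t/2) = ((k:ℝ)+1)*t - t/2 := by ring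
    rw [e1, Real.sin_add]
    rw [e2, Real.sin_sub] at ih
    linear_combination ih

lemma sin_sum_range (t : ℝ) (N : ℕ) :
    2 * Real.sin (t/2) * ∑ j ∈ Finset.range N, Real.sin ((2*(j:ℝ)+1) * (t/2)) =
      1 - Real.cos (N * t) := by
  induction N with
  | zero => simp
  | succ N ih =>
    rw [Finset.sum_range_succ, mul_add, ih]
    push_cast
    have h1 : Real.cos ((N:ℝ)*t) = Real.cos ((2*(N:ℝ)+1)*(t/2)) * Real.cos (t/2)
        + Real.sin ((2*(N:ℝ)+1)*(t/2)) * Real.sin (t/2) := by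
      have e : (N:ℝ)*t = (2*(N:ℝ)+1)*(t/2) - t/2 := by ring
      rw [e, Real.cos_sub]
    have h2 : Real.cos (((N:ℝ)+1)*t) = Real.cos ((2*(N:ℝ)+1)*(t/2)) * Real.cos (t/2)
        - Real.sin ((2*(N:ℝ)+1)*(t/2)) * Real.sin (t/2) := by
      have e : ((N:ℝ)+1)*t = (2*(N:ℝ)+1)*(t/2) + t/2 := by ring
      rw [e, Real.cos_add]
    linear_combination h2 - h1

lemma abel_icc (a b : ℕ → ℝ) (m n : ℕ) (h : m ≤ n) :
    ∑ k ∈ Finset.Icc m n, a k * b k =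
      ∑ k ∈ Finset.Ico m n, (a k - a (k+1)) * (∑ j ∈ Finset.Icc m k, b j)
        + a n * ∑ j ∈ Finset.Icc m n, b j := by
  induction n, h using Nat.le_induction with
  | base => simp
  | succ n hn ih =>
    rw [Finset.sum_Icc_succ_top (le_trans hn (Nat.le_succ n)), ih,
        Finset.sum_Ico_succ_top hn]
    rw [Finset.sum_Icc_succ_top (le_trans hn (Nat.le_succ n))]
    ring

lemma diff_le_var (a : ℕ → ℝ) (j N : ℕ) (h : j ≤ N) :
    a N ≤ a j + ∑ k ∈ Finset.Ico j N, |a k - a (k+1)| := by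
  induction N, h using Nat.le_induction with
  | base => simp
  | succ N hN ih =>
    rw [Finset.sum_Ico_succ_top hN]
    have : a (N+1) ≤ a N + |a N - a (N+1)| := by
      cases abs_cases (a N - a (N+1)) with
      | inl h => linarith [h.1]
      | inr h => linarith [h.1]
    linarith

set_option maxHeartbeats 1000000 in
/-- Lemma 2 (MRBVS case): for `2π/n ≤ t ≤ π` and an MRBVS row `(a k)`,
`|∑_{k=0}^n a_k D_k(t)| ≤ C · t⁻¹ · A_{n,τ}` with `τ = ⌊π/t⌋`. -/
theorem dirichlet_mean_bound_mrbvs (K : ℝ) (hK : 0 ≤ K) :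
    ∃ C : ℝ, ∀ (n : ℕ) (a : ℕ → ℝ) (t : ℝ), 2 ≤ n →
      (∀ k ≤ n, 0 ≤ a k) →
      (∀ m : ℕ, m < n →
        ∑ k ∈ Finset.Ico m n, |a k - a (k + 1)| ≤
          K / (m + 1) * ∑ k ∈ Finset.Icc ((m + 1) / 2) m, a k) →
      2 * π / n ≤ t → t ≤ π →
      |∑ k ∈ Finset.range (n + 1),
          a k * (1 / 2 + ∑ ν ∈ Finset.Icc 1 k, Real.cos (ν * t))| ≤
        C * t⁻¹ * ∑ k ∈ Finset.range (⌊π / t⌋₊ + 1), a k := by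
  refine ⟨π * (5 + 4*K), fun n a t hn ha hM ht1 ht2 => ?_⟩
  have hπ : 0 < π := Real.pi_pos
  have hnR : (0:ℝ) < n := by positivity
  have ht0 : 0 < t := lt_of_lt_of_le (by positivity) ht1
  set τ := ⌊π / t⌋₊ with hτdef
  set D : ℕ → ℝ := fun k => 1/2 + ∑ ν ∈ Finset.Icc 1 k, Real.cos (ν * t) with hD
  set A := ∑ k ∈ Finset.range (τ + 1), a k with hA
  -- τ facts
  have hτ_le : (τ:ℝ) ≤ π/t := Nat.floor_le (by positivity)
  have hτ_lt : π/t < (τ:ℝ) + 1 := Nat.lt_floor_add_one _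
  have hτ1 : 1 ≤ τ := by
    apply Nat.le_floor
    rw [Nat.cast_one, le_div_iff₀ ht0]; linarith
  have hτhalf : (τ:ℝ) ≤ (n:ℝ)/2 := by
    refine hτ_le.trans ?_
    rw [div_le_div_iff₀ ht0 two_pos]
    rw [div_le_iff₀ hnR] at ht1
    linarith
  have hτn : τ + 1 ≤ n := by
    have h2τ : 2*τ ≤ n := by
      have h' : ((2*τ:ℕ):ℝ) ≤ (n:ℝ) := by push_cast; linarith
      exact_mod_cast h'
    omega
  -- sin bounds
  clear_value τ
  have hs2 : t/π ≤ Real.sin (t/2) := by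
    have := Real.mul_le_sin (x := t/2) (by linarith) (by linarith)
    calc t/π = 2/π * (t/2) := by ring
    _ ≤ _ := this
  have hsin_pos : 0 < Real.sin (t/2) := lt_of_lt_of_le (by positivity) hs2
  -- nonnegativity
  have hDval : ∀ j : ℕ, 2 * Real.sin (t/2) * D j = Real.sin ((2*(j:ℝ)+1) * (t/2)) :=
    fun j => dir_closed t j
  have hDabs : ∀ k : ℕ, |D k| ≤ 1/2 + (k:ℝ) := by
    intro k
    simp only [hD]
    refine (abs_add_le _ _).trans ?_
    have h5 : |∑ ν ∈ Finset.Icc 1 k, Real.cos (ν * t)| ≤ (k:ℝ) := by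
      refine (Finset.abs_sum_le_sum_abs _ _).trans ?_
      calc ∑ ν ∈ Finset.Icc 1 k, |Real.cos (ν * t)|
          ≤ ∑ ν ∈ Finset.Icc 1 k, 1 :=
            Finset.sum_le_sum fun i _ => Real.abs_cos_le_one _
        _ = (k:ℝ) := by simp [Nat.card_Icc]
    simp only [abs_of_nonneg (by norm_num : (0:ℝ) ≤ 1/2)]
    linarith
  clear_value D
  have hA0 : 0 ≤ A := Finset.sum_nonneg fun k hk => ha k (by
    simp only [Finset.mem_range] at hk; omega)
  -- bound on |D k| for small k
  have hDk : ∀ k ≤ τ, |D k| ≤ (3*π/2) / t := by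
    intro k hk
    have h1 : |D k| ≤ 1/2 + (k:ℝ) := hDabs k
    have h2 : (k:ℝ) ≤ π/t := le_trans (by exact_mod_cast hk) hτ_le
    have h3 : 1/2 ≤ π/(2*t) := by
      rw [le_div_iff₀ (by linarith)]; linarith
    calc |D k| ≤ 1/2 + (k:ℝ) := h1
      _ ≤ π/(2*t) + π/t := by linarith
      _ = (3*π/2)/t := by field_simp; ring
  -- head bound
  have hhead : |∑ k ∈ Finset.range (τ+1), a k * D k| ≤ (3*π/2)/t * A := by
    refine (Finset.abs_sum_le_sum_abs _ _).trans ?_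
    rw [hA, Finset.mul_sum]
    refine Finset.sum_le_sum fun k hk => ?_
    simp only [Finset.mem_range] at hk
    have hk' : k ≤ τ := by omega
    have ha' : 0 ≤ a k := ha k (by omega)
    rw [abs_mul, abs_of_nonneg ha']
    calc a k * |D k| ≤ a k * ((3*π/2)/t) := by
          exact mul_le_mul_of_nonneg_left (hDk k hk') ha'
      _ = (3*π/2)/t * a k := by ring
  -- Dirichlet partial-sum kernel bound
  have hF : ∀ m k : ℕ, m ≤ k → |∑ j ∈ Finset.Icc m k, D j| ≤ π^2/(2*t^2) := by
    intro m k hmk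
    have key : (2*Real.sin (t/2)) * ((2*Real.sin (t/2)) * ∑ j ∈ Finset.Icc m k, D j)
        = Real.cos ((m:ℝ)*t) - Real.cos (((k:ℝ)+1)*t) := by
      have e1 : (2*Real.sin (t/2)) * ∑ j ∈ Finset.Icc m k, D j
          = ∑ j ∈ Finset.Icc m k, Real.sin ((2*(j:ℝ)+1) * (t/2)) := by
        rw [Finset.mul_sum]
        exact Finset.sum_congr rfl fun j _ => hDval j
      rw [e1, ← Finset.Ico_add_one_right_eq_Icc, Finset.sum_Ico_eq_sub _ (by omega), mul_sub,
        sin_sum_range, sin_sum_range]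
      push_cast
      ring
    have h2 : |(2*Real.sin (t/2))^2 * ∑ j ∈ Finset.Icc m k, D j| ≤ 2 := by
      rw [(by ring : (2*Real.sin (t/2))^2 * ∑ j ∈ Finset.Icc m k, D j
        = (2*Real.sin (t/2)) * ((2*Real.sin (t/2)) * ∑ j ∈ Finset.Icc m k, D j)), key]
      refine (abs_sub _ _).trans ?_
      have := Real.abs_cos_le_one ((m:ℝ)*t)
      have := Real.abs_cos_le_one (((k:ℝ)+1)*t)
      linarith
    rw [abs_mul, abs_of_nonneg (by positivity : (0:ℝ) ≤ (2*Real.sin (t/2))^2)] at h2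
    have hsq : (2*(t/π))^2 ≤ (2*Real.sin (t/2))^2 := by
      have h0 : 0 ≤ 2*(t/π) := by positivity
      nlinarith
    have hpos : (0:ℝ) < (2*(t/π))^2 := by positivity
    have h3 : (2*(t/π))^2 * |∑ j ∈ Finset.Icc m k, D j| ≤ 2 :=
      le_trans (mul_le_mul_of_nonneg_right hsq (abs_nonneg _)) h2
    rw [(by field_simp : π^2/(2*t^2) = 2 / (2*(t/π))^2), le_div_iff₀ hpos]
    linarith
  -- MRBVS estimates
  set m0 := (τ + 2)/2 with hm0def
  have hm0τ : m0 ≤ τ := by omega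
  have hm0n : m0 < n := by omega
  have hm2 : τ + 2 ≤ 2*(m0+1) := by omega
  have hm3 : 2*m0 ≤ τ + 2 := by omega
  clear_value m0
  set Vm0 := ∑ k ∈ Finset.Ico m0 n, |a k - a (k+1)| with hVm0def
  have hVm0_nonneg : 0 ≤ Vm0 := Finset.sum_nonneg fun k _ => abs_nonneg _
  have hVm0 : Vm0 ≤ 2*K*t/π * A := by
    have h1 : Vm0 ≤ K/(m0+1) * ∑ k ∈ Finset.Icc ((m0+1)/2) m0, a k := hM m0 hm0n
    have h2 : ∑ k ∈ Finset.Icc ((m0+1)/2) m0, a k ≤ A := by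
      refine Finset.sum_le_sum_of_subset_of_nonneg ?_ fun i hi _ => ha i (by
        simp only [Finset.mem_range] at hi; omega)
      intro x hx
      simp only [Finset.mem_Icc] at hx
      simp only [Finset.mem_range]
      omega
    have h3 : K/((m0:ℝ)+1) ≤ 2*K*t/π := by
      have hm : (τ:ℝ) + 2 ≤ 2*((m0:ℝ)+1) := by exact_mod_cast hm2
      have hπt : π/t < (τ:ℝ) + 2 := by linarith
      have hm0pos : (0:ℝ) < (m0:ℝ)+1 := by positivity
      rw [div_le_div_iff₀ hm0pos hπ]
      have h4 : π < 2*t*((m0:ℝ)+1) := by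
        rw [div_lt_iff₀ ht0] at hπt
        nlinarith
      nlinarith
    calc Vm0 ≤ K/(m0+1) * ∑ k ∈ Finset.Icc ((m0+1)/2) m0, a k := h1
      _ ≤ K/(m0+1) * A := mul_le_mul_of_nonneg_left h2 (by positivity)
      _ ≤ 2*K*t/π * A := mul_le_mul_of_nonneg_right h3 hA0
  set V := ∑ k ∈ Finset.Ico (τ+1) n, |a k - a (k+1)| with hVdef
  have hV_nonneg : 0 ≤ V := Finset.sum_nonneg fun k _ => abs_nonneg _
  have hVle : V ≤ Vm0 := by
    refine Finset.sum_le_sum_of_subset_of_nonneg ?_ fun i _ _ => abs_nonneg _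
    intro x hx
    simp only [Finset.mem_Ico] at hx ⊢
    omega
  -- bound a (τ+1)
  have haj : ∀ j ∈ Finset.Icc m0 (τ+1), a (τ+1) ≤ a j + Vm0 := by
    intro j hj
    simp only [Finset.mem_Icc] at hj
    refine (diff_le_var a j (τ+1) hj.2).trans ?_
    gcongr
    rw [hVm0def]
    refine Finset.sum_le_sum_of_subset_of_nonneg ?_ fun i _ _ => abs_nonneg _
    intro x hx
    simp only [Finset.mem_Ico] at hx ⊢
    omega
  have hcard : (Finset.Icc m0 (τ+1)).card = τ + 2 - m0 := by
    rw [Nat.card_Icc]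
  have hsum_card : ((τ+2-m0 : ℕ):ℝ) * a (τ+1) ≤ (A + a (τ+1)) + ((τ+2-m0:ℕ):ℝ) * Vm0 := by
    have h1 : ∑ _j ∈ Finset.Icc m0 (τ+1), a (τ+1) ≤ ∑ j ∈ Finset.Icc m0 (τ+1), (a j + Vm0) :=
      Finset.sum_le_sum haj
    rw [Finset.sum_const, hcard, Finset.sum_add_distrib, Finset.sum_const, hcard] at h1
    have h2 : ∑ j ∈ Finset.Icc m0 (τ+1), a j ≤ A + a (τ+1) := by
      rw [Finset.sum_Icc_succ_top (by omega : m0 ≤ τ+1)]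
      have : ∑ j ∈ Finset.Icc m0 τ, a j ≤ A := by
        refine Finset.sum_le_sum_of_subset_of_nonneg ?_ fun i hi _ => ha i (by
          simp only [Finset.mem_range] at hi; omega)
        intro x hx
        simp only [Finset.mem_Icc] at hx
        simp only [Finset.mem_range]
        omega
      linarith
    simp only [nsmul_eq_mul] at h1
    linarith
  clear_value A Vm0 V
  have haτ1_nonneg : 0 ≤ a (τ+1) := ha _ (by omega)
  have haτ1 : a (τ+1) ≤ 6*t/π * A + 2*Vm0 := by
    set c : ℝ := ((τ+2-m0 : ℕ):ℝ) with hc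
    have hc2 : (2:ℝ) ≤ c := by
      have h9 : 2 ≤ τ + 2 - m0 := by omega
      rw [hc]
      exact_mod_cast h9
    have hc6 : (τ:ℝ) + 2 ≤ 6*(c-1) := by
      have : τ + 2 ≤ 6*(τ+2-m0) - 6 := by omega
      have h' : ((τ+2:ℕ):ℝ) ≤ ((6*(τ+2-m0) - 6 : ℕ):ℝ) := by exact_mod_cast this
      push_cast at h'
      have h6 : ((6*(τ+2-m0) - 6 : ℕ):ℝ) = 6*c - 6 := by
        have : 6 ≤ 6*(τ+2-m0) := by omega
        rw [hc]
        push_cast [Nat.cast_sub this]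
        ring
      rw [h6] at h'
      push_cast at h' ⊢
      linarith
    have hπc : π < t * (6*(c-1)) := by
      rw [div_lt_iff₀ ht0] at hτ_lt
      nlinarith [mul_le_mul_of_nonneg_left hc6 ht0.le]
    have hkey : (c-1) * a (τ+1) ≤ A + c * Vm0 := by
      rw [hc] at hsum_card ⊢
      linarith [hsum_card]
    have h7 : π*(c-1)*a (τ+1) ≤ 6*t*(c-1)*A + 2*π*(c-1)*Vm0 := by
      nlinarith [mul_le_mul_of_nonneg_left hkey hπ.le,
        mul_le_mul_of_nonneg_right hπc.le hA0,
        mul_nonneg (mul_nonneg hπ.le hVm0_nonneg) (by linarith : (0:ℝ) ≤ c - 2)]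
    have hpc : 0 < π*(c-1) := by nlinarith
    have e : π*(c-1)*(6*t/π*A + 2*Vm0) = 6*t*(c-1)*A + 2*π*(c-1)*Vm0 := by
      field_simp
    nlinarith [h7, e, mul_le_mul_of_nonneg_left (le_refl (a (τ+1))) hpc.le]
  -- bound a n
  have han : a n ≤ 6*t/π * A + 3*Vm0 := by
    have := diff_le_var a (τ+1) n hτn
    rw [← hVdef] at this
    linarith
  -- tail bound via Abel summation
  have htail : |∑ k ∈ Finset.Icc (τ+1) n, a k * D k| ≤ π*(3+4*K)/t * A := by
    rw [abel_icc a D (τ+1) n hτn]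
    have hB : ∀ k, τ+1 ≤ k → |∑ j ∈ Finset.Icc (τ+1) k, D j| ≤ π^2/(2*t^2) :=
      fun k hk => hF (τ+1) k hk
    have h1 : |∑ k ∈ Finset.Ico (τ+1) n, (a k - a (k+1)) * (∑ j ∈ Finset.Icc (τ+1) k, D j)|
        ≤ V * (π^2/(2*t^2)) := by
      refine (Finset.abs_sum_le_sum_abs _ _).trans ?_
      rw [hVdef, Finset.sum_mul]
      refine Finset.sum_le_sum fun k hk => ?_
      simp only [Finset.mem_Ico] at hk
      rw [abs_mul]
      exact mul_le_mul_of_nonneg_left (hB k hk.1) (abs_nonneg _)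
    have h2 : |a n * ∑ j ∈ Finset.Icc (τ+1) n, D j| ≤ a n * (π^2/(2*t^2)) := by
      rw [abs_mul, abs_of_nonneg (ha n le_rfl)]
      exact mul_le_mul_of_nonneg_left (hB n hτn) (ha n le_rfl)
    have h3 : V + a n ≤ (6+8*K)*t/π * A := by
      have : V + a n ≤ 4*Vm0 + 6*t/π * A := by linarith
      have h4 : 4*Vm0 ≤ 8*K*t/π * A := by
        have := mul_le_mul_of_nonneg_left hVm0 (by norm_num : (0:ℝ) ≤ 4)
        calc 4*Vm0 ≤ 4*(2*K*t/π * A) := this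
          _ = 8*K*t/π * A := by ring
      have e : (6+8*K)*t/π * A = 6*t/π*A + 8*K*t/π*A := by ring
      rw [e]
      linarith
    have hBpos : (0:ℝ) ≤ π^2/(2*t^2) := by positivity
    calc |∑ k ∈ Finset.Ico (τ+1) n, (a k - a (k+1)) * (∑ j ∈ Finset.Icc (τ+1) k, D j)
          + a n * ∑ j ∈ Finset.Icc (τ+1) n, D j|
        ≤ V * (π^2/(2*t^2)) + a n * (π^2/(2*t^2)) := le_trans (abs_add_le _ _) (by linarith)
      _ = (V + a n) * (π^2/(2*t^2)) := by ring
      _ ≤ ((6+8*K)*t/π * A) * (π^2/(2*t^2)) :=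
          mul_le_mul_of_nonneg_right h3 hBpos
      _ = π*(3+4*K)/t * A := by field_simp; ring
  -- combine
  have hsplit : ∑ k ∈ Finset.range (n+1), a k * D k
      = ∑ k ∈ Finset.range (τ+1), a k * D k + ∑ k ∈ Finset.Icc (τ+1) n, a k * D k := by
    rw [← Finset.Ico_add_one_right_eq_Icc, ← Finset.sum_range_add_sum_Ico _ (by omega : τ+1 ≤ n+1)]
  have final : |∑ k ∈ Finset.range (n+1), a k * D k| ≤ (3*π/2/t + π*(3+4*K)/t) * A := by
    rw [hsplit]
    refine (abs_add_le _ _).trans ?_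
    rw [add_mul]
    exact add_le_add hhead htail
  have e2 : π * (5 + 4*K) * t⁻¹ * A = (π*(5+4*K)/t) * A := by
    rw [inv_eq_one_div]; ring
  have hgoal2 : ∑ k ∈ Finset.range (n+1),
      a k * (1 / 2 + ∑ ν ∈ Finset.Icc 1 k, Real.cos (ν * t))
      = ∑ k ∈ Finset.range (n+1), a k * D k :=
    Finset.sum_congr rfl fun k _ => by rw [hD]
  rw [hgoal2]
  calc |∑ k ∈ Finset.range (n+1), a k * D k| ≤ (3*π/2/t + π*(3+4*K)/t) * A := final
    _ ≤ (π*(5+4*K)/t) * A := by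
        refine mul_le_mul_of_nonneg_right ?_ hA0
        rw [← add_div, div_le_div_iff₀ ht0 ht0]
        nlinarith
    _ = π * (5 + 4*K) * t⁻¹ * A := e2.symm
end

section
/- Let 2 ≤ n, let 2π/n ≤ t ≤ π, set τ = ⌊π/t⌋ (so τ ≤ n/2), and let (a_{n,k})_{k=0}^n be a nonnegative sequence belonging to MHBVS with uniform constant K, i.e. ∑_{k=0}^{n-m-1} |a_{n,k} - a_{n,k+1}| ≤ K/(m+1) ∑_{k=n-m}^n a_{n,k} for all 0 ≤ m < n. Then there exists a constant C (depending only on K) such that |∑_{k=0}^n a_{n,k} D_k(t)| ≤ C · t^{-1} · ∑_{k=n-2τ}^n a_{n,k}. -/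
open Finset Real

noncomputable def Dker (t : ℝ) (k : ℕ) : ℝ := 1 / 2 + ∑ ν ∈ Finset.Icc 1 k, Real.cos (ν * t)

lemma Dker_mul (t : ℝ) (k : ℕ) :
    2 * Real.sin (t / 2) * Dker t k = Real.sin (k * t + t / 2) := by
  induction k with
  | zero => simp [Dker]; ring
  | succ k ih =>
    have h : Real.sin (((k : ℝ) + 1) * t + t / 2) - Real.sin ((k : ℝ) * t + t / 2)
        = 2 * Real.sin (t / 2) * Real.cos (((k : ℝ) + 1) * t) := by
      rw [Real.sin_sub_sin]
      ring_nf
    rw [Dker, Finset.sum_Icc_succ_top (by omega : 1 ≤ k + 1)]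
    rw [Dker] at ih
    push_cast at ih h ⊢
    linear_combination ih - h

lemma Dker_sum (t : ℝ) (m : ℕ) :
    4 * Real.sin (t / 2) ^ 2 * ∑ k ∈ Finset.range m, Dker t k = 1 - Real.cos (m * t) := by
  have key : ∀ k : ℕ, 4 * Real.sin (t / 2) ^ 2 * Dker t k
      = Real.cos ((k : ℝ) * t) - Real.cos (((k : ℝ) + 1) * t) := by
    intro k
    have h1 := Dker_mul t k
    have h2 : Real.cos ((k : ℝ) * t) - Real.cos (((k : ℝ) + 1) * t)
        = 2 * Real.sin (t / 2) * Real.sin ((k : ℝ) * t + t / 2) := by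
      rw [Real.cos_sub_cos]
      rw [show ((k : ℝ) * t - ((k : ℝ) + 1) * t) / 2 = -(t / 2) by ring, Real.sin_neg]
      ring_nf
    rw [h2, ← h1]; ring
  have tel := Finset.sum_range_sub' (fun k : ℕ => Real.cos ((k : ℝ) * t)) m
  calc 4 * Real.sin (t / 2) ^ 2 * ∑ k ∈ Finset.range m, Dker t k
      = ∑ k ∈ Finset.range m, 4 * Real.sin (t / 2) ^ 2 * Dker t k := by
        rw [Finset.mul_sum]
    _ = ∑ k ∈ Finset.range m, (Real.cos ((k : ℝ) * t) - Real.cos (((k : ℝ) + 1) * t)) := by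
        exact Finset.sum_congr rfl fun k _ => key k
    _ = 1 - Real.cos (m * t) := by
        push_cast at tel
        simpa using tel

lemma dirichlet_combine_eq (K S t : ℝ) (ht : t ≠ 0) :
    (1 + 2 * K) * S * t / π * (π ^ 2 / (2 * t ^ 2)) + π / (2 * t) * S
      = π * (1 + K) * t⁻¹ * S := by
  have hπ : π ≠ 0 := Real.pi_ne_zero
  field_simp
  ring

set_option maxHeartbeats 2000000 in
/-- Lemma 2 (MHBVS case): for `2π/n ≤ t ≤ π` and an MHBVS row `(a k)`,
`|∑_{k=0}^n a_k D_k(t)| ≤ C · t⁻¹ · ∑_{k=n-2τ}^n a_k` with `τ = ⌊π/t⌋`. -/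
theorem dirichlet_mean_bound_mhbvs (K : ℝ) (hK : 0 ≤ K) :
    ∃ C : ℝ, ∀ (n : ℕ) (a : ℕ → ℝ) (t : ℝ), 2 ≤ n →
      (∀ k ≤ n, 0 ≤ a k) →
      (∀ m : ℕ, m < n →
        ∑ k ∈ Finset.range (n - m), |a k - a (k + 1)| ≤
          K / (m + 1) * ∑ k ∈ Finset.Icc (n - m) n, a k) →
      2 * π / n ≤ t → t ≤ π →
      |∑ k ∈ Finset.range (n + 1),
          a k * (1 / 2 + ∑ ν ∈ Finset.Icc 1 k, Real.cos (ν * t))| ≤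
        C * t⁻¹ * ∑ k ∈ Finset.Icc (n - 2 * ⌊π / t⌋₊) n, a k := by
  refine ⟨π * (1 + K), ?_⟩
  intro n a t hn ha hbv ht1 ht2
  have hπ : (0:ℝ) < π := Real.pi_pos
  have hn0 : (0:ℝ) < n := by positivity
  have ht0 : (0:ℝ) < t := lt_of_lt_of_le (by positivity) ht1
  -- rewrite the kernel with Dker
  have hDrw : ∀ k : ℕ, (1 / 2 + ∑ ν ∈ Finset.Icc 1 k, Real.cos (ν * t)) = Dker t k :=
    fun k => rfl
  simp only [hDrw]
  set τ := ⌊π / t⌋₊ with hτdef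
  have hτ1 : 1 ≤ τ := by
    apply Nat.le_floor
    rw [Nat.cast_one, le_div_iff₀ ht0]
    linarith
  have hτle : (τ : ℝ) ≤ π / t := Nat.floor_le (by positivity)
  have h2τn : 2 * τ ≤ n := by
    have h1 : 2 * π ≤ t * n := by
      have := (div_le_iff₀ hn0).mp ht1
      linarith
    have h2 : (2 * τ : ℝ) ≤ (n : ℝ) := by
      have : (τ : ℝ) * t ≤ π := by
        have := (le_div_iff₀ ht0).mp hτle
        linarith
      nlinarith
    exact_mod_cast h2
  have hτn : τ < n := by omega
  have hπt : π < t * ((τ : ℝ) + 1) := by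
    have hfl : π / t < (τ : ℝ) + 1 := by
      have := Nat.lt_floor_add_one (π / t)
      push_cast at this
      linarith
    have := (div_lt_iff₀ ht0).mp hfl
    linarith
  -- sine bounds
  have hs0 : 0 < Real.sin (t / 2) :=
    Real.sin_pos_of_pos_of_lt_pi (by linarith) (by linarith)
  have hst : t / π ≤ Real.sin (t / 2) := by
    have h := Real.mul_le_sin (x := t / 2) (by linarith) (by linarith)
    calc t / π = 2 / π * (t / 2) := by ring
      _ ≤ _ := h
  have htπs : t ≤ π * Real.sin (t / 2) := by
    have := (div_le_iff₀ hπ).mp hst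
    linarith
  -- bound on individual Dirichlet kernels
  have hDabs : ∀ k : ℕ, |Dker t k| ≤ π / (2 * t) := by
    intro k
    have h2s : (0:ℝ) < 2 * Real.sin (t / 2) := by linarith
    have h1 : |Dker t k| = |Real.sin ((k : ℝ) * t + t / 2)| / (2 * Real.sin (t / 2)) := by
      rw [← Dker_mul t k, abs_mul, abs_of_pos h2s, mul_div_cancel_left₀ _ (ne_of_gt h2s)]
    rw [h1]
    have h2 : |Real.sin ((k : ℝ) * t + t / 2)| / (2 * Real.sin (t / 2))
        ≤ 1 / (2 * Real.sin (t / 2)) := by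
      gcongr
      exact Real.abs_sin_le_one _
    refine h2.trans ?_
    rw [div_le_div_iff₀ h2s (by linarith : (0:ℝ) < 2 * t)]
    nlinarith
  -- bound on partial sums of Dirichlet kernels
  have hGabs : ∀ m : ℕ, |∑ k ∈ Finset.range m, Dker t k| ≤ π ^ 2 / (2 * t ^ 2) := by
    intro m
    have h4s : (0:ℝ) < 4 * Real.sin (t / 2) ^ 2 := by positivity
    have h1 : |∑ k ∈ Finset.range m, Dker t k|
        = |1 - Real.cos ((m : ℝ) * t)| / (4 * Real.sin (t / 2) ^ 2) := by
      rw [← Dker_sum t m, abs_mul, abs_of_pos h4s, mul_div_cancel_left₀ _ (ne_of_gt h4s)]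
    rw [h1]
    have h2 : |1 - Real.cos ((m : ℝ) * t)| ≤ 2 := by
      have := Real.neg_one_le_cos ((m : ℝ) * t)
      have := Real.cos_le_one ((m : ℝ) * t)
      rw [abs_le]; constructor <;> linarith
    have h3 : |1 - Real.cos ((m : ℝ) * t)| / (4 * Real.sin (t / 2) ^ 2)
        ≤ 2 / (4 * Real.sin (t / 2) ^ 2) := by gcongr
    refine h3.trans ?_
    rw [div_le_div_iff₀ h4s (by positivity : (0:ℝ) < 2 * t ^ 2)]
    nlinarith
  -- notation for the relevant sums
  set M := n - τ with hMdef
  have hM1 : 1 ≤ M := by omega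
  set S := ∑ k ∈ Finset.Icc (n - 2 * τ) n, a k with hSdef
  have hS0 : 0 ≤ S :=
    Finset.sum_nonneg fun k hk => ha k (Finset.mem_Icc.mp hk).2
  set V := ∑ k ∈ Finset.range M, |a k - a (k + 1)| with hVdef
  have hV0 : 0 ≤ V := Finset.sum_nonneg fun _ _ => abs_nonneg _
  have hτpos : (0:ℝ) < (τ : ℝ) + 1 := by positivity
  have hVS : V ≤ K / ((τ : ℝ) + 1) * S := by
    refine (hbv τ hτn).trans ?_
    have hsub : ∑ k ∈ Finset.Icc (n - τ) n, a k ≤ S := by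
      refine Finset.sum_le_sum_of_subset_of_nonneg
        (Finset.Icc_subset_Icc (by omega) le_rfl) ?_
      intro k hk _
      exact ha k (Finset.mem_Icc.mp hk).2
    push_cast
    exact mul_le_mul_of_nonneg_left hsub (by positivity)
  have hVS' : ((τ : ℝ) + 1) * V ≤ K * S := by
    have e : ((τ : ℝ) + 1) * (K / ((τ : ℝ) + 1) * S) = K * S := by
      field_simp
    have := mul_le_mul_of_nonneg_left hVS hτpos.le
    linarith [this.trans_eq e]
  -- telescoping variation bound
  have htel : ∀ p q : ℕ, p ≤ q →
      |a p - a q| ≤ ∑ k ∈ Finset.Ico p q, |a k - a (k + 1)| := by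
    intro p q hpq
    induction q, hpq using Nat.le_induction with
    | base => simp
    | succ q hpq ih =>
      rw [Finset.sum_Ico_succ_top hpq]
      calc |a p - a (q + 1)| ≤ |a p - a q| + |a q - a (q + 1)| := abs_sub_le _ _ _
        _ ≤ _ := by linarith
  have hvar : ∀ p q : ℕ, p ≤ M → q ≤ M → |a p - a q| ≤ V := by
    have key : ∀ p q : ℕ, p ≤ q → q ≤ M → |a p - a q| ≤ V := by
      intro p q hpq hq
      refine (htel p q hpq).trans ?_
      refine Finset.sum_le_sum_of_subset_of_nonneg ?_ (fun _ _ _ => abs_nonneg _)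
      intro k hk
      have := Finset.mem_Ico.mp hk
      exact Finset.mem_range.mpr (by omega)
    intro p q hp hq
    rcases le_total p q with h | h
    · exact key p q h hq
    · rw [abs_sub_comm]; exact key q p h hp
  -- averaging bound for a (M - 1)
  have hcard : (Finset.Icc (n - 2 * τ) M).card = τ + 1 := by
    rw [Nat.card_Icc]; omega
  have hav : ((τ : ℝ) + 1) * a (M - 1) ≤ S + ((τ : ℝ) + 1) * V := by
    have h1 : ∀ j ∈ Finset.Icc (n - 2 * τ) M, a (M - 1) ≤ a j + V := by
      intro j hj
      have hj' := Finset.mem_Icc.mp hj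
      have h := hvar (M - 1) j (by omega) hj'.2
      have h2 : a (M - 1) - a j ≤ V := (le_abs_self _).trans h
      linarith
    have h2 : ∑ j ∈ Finset.Icc (n - 2 * τ) M, a j ≤ S := by
      refine Finset.sum_le_sum_of_subset_of_nonneg
        (Finset.Icc_subset_Icc le_rfl (by omega)) ?_
      intro k hk _
      exact ha k (Finset.mem_Icc.mp hk).2
    calc ((τ : ℝ) + 1) * a (M - 1)
        = ∑ _j ∈ Finset.Icc (n - 2 * τ) M, a (M - 1) := by
          rw [Finset.sum_const, hcard]; push_cast; ring
      _ ≤ ∑ j ∈ Finset.Icc (n - 2 * τ) M, (a j + V) := Finset.sum_le_sum h1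
      _ = (∑ j ∈ Finset.Icc (n - 2 * τ) M, a j) + ((τ : ℝ) + 1) * V := by
          rw [Finset.sum_add_distrib, Finset.sum_const, hcard]; push_cast; ring
      _ ≤ S + ((τ : ℝ) + 1) * V := by linarith
  -- split the sum
  have hsplit : ∑ k ∈ Finset.range (n + 1), a k * Dker t k
      = (∑ k ∈ Finset.range M, a k * Dker t k)
        + ∑ k ∈ Finset.Icc M n, a k * Dker t k := by
    rw [Finset.range_eq_Ico, ← Finset.Ico_add_one_right_eq_Icc,
      ← Finset.sum_Ico_consecutive _ (Nat.zero_le M) (show M ≤ n + 1 by omega), Finset.range_eq_Ico]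
  -- summation by parts for the head
  have hparts := Finset.sum_range_by_parts a (Dker t) M
  simp only [smul_eq_mul] at hparts
  -- head bound
  have hhead : |∑ k ∈ Finset.range M, a k * Dker t k|
      ≤ (a (M - 1) + V) * (π ^ 2 / (2 * t ^ 2)) := by
    rw [hparts]
    have hB0 : (0:ℝ) ≤ π ^ 2 / (2 * t ^ 2) := by positivity
    have haM : 0 ≤ a (M - 1) := ha _ (by omega)
    have h1 : |a (M - 1) * ∑ i ∈ Finset.range M, Dker t i|
        ≤ a (M - 1) * (π ^ 2 / (2 * t ^ 2)) := by
      rw [abs_mul, abs_of_nonneg haM]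
      exact mul_le_mul_of_nonneg_left (hGabs M) haM
    have h2 : |∑ i ∈ Finset.range (M - 1),
          (a (i + 1) - a i) * ∑ j ∈ Finset.range (i + 1), Dker t j|
        ≤ V * (π ^ 2 / (2 * t ^ 2)) := by
      calc |∑ i ∈ Finset.range (M - 1),
            (a (i + 1) - a i) * ∑ j ∈ Finset.range (i + 1), Dker t j|
          ≤ ∑ i ∈ Finset.range (M - 1),
            |(a (i + 1) - a i) * ∑ j ∈ Finset.range (i + 1), Dker t j| :=
            Finset.abs_sum_le_sum_abs _ _
        _ ≤ ∑ i ∈ Finset.range (M - 1), |a (i + 1) - a i| * (π ^ 2 / (2 * t ^ 2)) := by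
            refine Finset.sum_le_sum fun i _ => ?_
            rw [abs_mul]
            exact mul_le_mul_of_nonneg_left (hGabs (i + 1)) (abs_nonneg _)
        _ = (∑ i ∈ Finset.range (M - 1), |a i - a (i + 1)|) * (π ^ 2 / (2 * t ^ 2)) := by
            rw [← Finset.sum_mul]
            congr 1
            exact Finset.sum_congr rfl fun i _ => by rw [abs_sub_comm]
        _ ≤ V * (π ^ 2 / (2 * t ^ 2)) := by
            refine mul_le_mul_of_nonneg_right ?_ hB0
            refine Finset.sum_le_sum_of_subset_of_nonneg ?_ (fun _ _ _ => abs_nonneg _)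
            exact Finset.range_subset_range.mpr (by omega)
    calc |a (M - 1) * (∑ i ∈ Finset.range M, Dker t i)
          - ∑ i ∈ Finset.range (M - 1),
            (a (i + 1) - a i) * ∑ j ∈ Finset.range (i + 1), Dker t j|
        ≤ |a (M - 1) * ∑ i ∈ Finset.range M, Dker t i|
          + |∑ i ∈ Finset.range (M - 1),
            (a (i + 1) - a i) * ∑ j ∈ Finset.range (i + 1), Dker t j| := abs_sub _ _
      _ ≤ a (M - 1) * (π ^ 2 / (2 * t ^ 2)) + V * (π ^ 2 / (2 * t ^ 2)) := by
          exact add_le_add h1 h2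
      _ = (a (M - 1) + V) * (π ^ 2 / (2 * t ^ 2)) := by ring
  -- tail bound
  have htail : |∑ k ∈ Finset.Icc M n, a k * Dker t k| ≤ π / (2 * t) * S := by
    calc |∑ k ∈ Finset.Icc M n, a k * Dker t k|
        ≤ ∑ k ∈ Finset.Icc M n, |a k * Dker t k| := Finset.abs_sum_le_sum_abs _ _
      _ ≤ ∑ k ∈ Finset.Icc M n, a k * (π / (2 * t)) := by
          refine Finset.sum_le_sum fun k hk => ?_
          have hk' := (Finset.mem_Icc.mp hk).2
          rw [abs_mul, abs_of_nonneg (ha k hk')]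
          exact mul_le_mul_of_nonneg_left (hDabs k) (ha k hk')
      _ = (∑ k ∈ Finset.Icc M n, a k) * (π / (2 * t)) := by rw [← Finset.sum_mul]
      _ ≤ S * (π / (2 * t)) := by
          refine mul_le_mul_of_nonneg_right ?_ (by positivity)
          refine Finset.sum_le_sum_of_subset_of_nonneg
            (Finset.Icc_subset_Icc (by omega) le_rfl) ?_
          intro k hk _
          exact ha k (Finset.mem_Icc.mp hk).2
      _ = π / (2 * t) * S := by ring
  -- combine
  clear_value τ M S V
  have hAV : a (M - 1) + V ≤ (1 + 2 * K) * S / ((τ : ℝ) + 1) := by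
    rw [le_div_iff₀ hτpos]
    nlinarith [hav, hVS']
  have hA2 : (1 + 2 * K) * S / ((τ : ℝ) + 1) ≤ (1 + 2 * K) * S * t / π := by
    have h0 : (0:ℝ) ≤ (1 + 2 * K) * S := mul_nonneg (by linarith) hS0
    rw [div_le_div_iff₀ hτpos hπ]
    calc (1 + 2 * K) * S * π ≤ (1 + 2 * K) * S * (t * ((τ : ℝ) + 1)) :=
          mul_le_mul_of_nonneg_left hπt.le h0
      _ = (1 + 2 * K) * S * t * ((τ : ℝ) + 1) := by ring
  have hhead2 : |∑ k ∈ Finset.range M, a k * Dker t k|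
      ≤ (1 + 2 * K) * S * t / π * (π ^ 2 / (2 * t ^ 2)) := by
    refine hhead.trans ?_
    exact mul_le_mul_of_nonneg_right (hAV.trans hA2) (by positivity)
  have hfin : (1 + 2 * K) * S * t / π * (π ^ 2 / (2 * t ^ 2)) + π / (2 * t) * S
      = π * (1 + K) * t⁻¹ * S := dirichlet_combine_eq K S t (ne_of_gt ht0)
  refine le_trans ?_ (le_of_eq hfin)
  refine le_trans ?_ (add_le_add hhead2 htail)
  rw [hsplit]
  exact abs_add_le _ _
end
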